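/- Let H be a graph on vertex set {1,…,m} with e(H) edges, and let Γ be a graph with finite nonempty vertex subsets X₁,…,X_m such that for every edge ab of H, the pair (X_a,X_b)_Γ is (p, c p^k √(|X_a||X_b|))-jumbled, where k ≥ (d(L(H)) + 2)/2 and d(L(H)) is the degeneracy of the line graph of H. Then |Γ(H) − p^{e(H)}| ≤ ((1+c)^{e(H)} − 1) p^{e(H)}, where Γ(H) = E_{x₁,…,x_m}[∏_{ab∈E(H)} Γ(x_a,x_b)]. -/

import Mathlib

open Classical in
/-- The density of compatible weighted homomorphisms of `H` into the weighted graph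
given by the edge weights `f i j`, with vertex `i` landing in `Y i`. -/
noncomputable def den {V ι : Type*} [Fintype V] [Fintype ι] [LinearOrder ι]
    (f : ι → ι → V → V → ℝ) (H : SimpleGraph ι) (Y : ι → Finset V) : ℝ :=
  (∑ z ∈ Fintype.piFinset Y, ∏ i : ι, ∏ j : ι,
      if i < j ∧ H.Adj i j then f i j (z i) (z j) else 1) /
    ∏ i : ι, ((Y i).card : ℝ)

open Classical in
/-- The degeneracy of the line graph of `H`: the maximum over subsets `S` of the edge set of
the minimum over `e ∈ S` of the number of other edges of `S` sharing an endpoint with `e`. -/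
noncomputable def lineGraphDegeneracy {m : ℕ} (H : SimpleGraph (Fin m))
    [DecidableRel H.Adj] : ℕ :=
  H.edgeFinset.powerset.sup fun S =>
    if h : S.Nonempty then
      S.inf' h fun e => (S.filter fun f => f ≠ e ∧ ∃ v, v ∈ e ∧ v ∈ f).card
    else 0

/-- `(p, γ√(|A||B|))`-jumbledness of the pair `(A, B)` in the weighted graph `Γ`,
in functional form. -/
def Jumbled {V : Type*} (Γ : V → V → ℝ) (A B : Finset V) (p γ : ℝ) : Prop :=
  ∀ u v : V → ℝ, (∀ x, 0 ≤ u x ∧ u x ≤ 1) → (∀ y, 0 ≤ v y ∧ v y ≤ 1) →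
    |(∑ x ∈ A, ∑ y ∈ B, (Γ x y - p) * u x * v y) / ((A.card : ℝ) * (B.card : ℝ))|
      ≤ γ * Real.sqrt ((∑ x ∈ A, u x) / (A.card : ℝ)) *
          Real.sqrt ((∑ y ∈ B, v y) / (B.card : ℝ))


section CountingProof

open Finset Function

variable {V : Type*} [Fintype V] {m : ℕ}


noncomputable def NN (X : Fin m → Finset V) (Γ : V → V → ℝ)
    (A : Finset (Fin m × Fin m)) : ℝ :=
  ∑ z ∈ Fintype.piFinset X, ∏ f ∈ A, Γ (z f.1) (z f.2)

lemma sum_update_aux (X : Fin m → Finset V) (a : Fin m) (F : (Fin m → V) → ℝ) :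
    ∑ z ∈ Fintype.piFinset X, ∑ x ∈ X a, F (Function.update z a x)
      = (X a).card * ∑ z ∈ Fintype.piFinset X, F z := by
  have h1 : ∑ z ∈ Fintype.piFinset X, ∑ x ∈ X a, F (Function.update z a x)
      = ∑ zx ∈ (Fintype.piFinset X) ×ˢ (X a), F (Function.update zx.1 a zx.2) := by
    rw [Finset.sum_product]
  have h2 : ∑ zx ∈ (Fintype.piFinset X) ×ˢ (X a), (F zx.1 : ℝ)
      = ((X a).card : ℝ) * ∑ z ∈ Fintype.piFinset X, F z := by
    rw [Finset.sum_product]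
    simp [Finset.sum_const, nsmul_eq_mul, Finset.mul_sum, mul_comm]
  rw [h1, ← h2]
  refine Finset.sum_nbij' (fun zx => (Function.update zx.1 a zx.2, zx.1 a))
    (fun zx => (Function.update zx.1 a zx.2, zx.1 a)) ?_ ?_ ?_ ?_ ?_
  · rintro ⟨z, x⟩ hzx
    simp only [Finset.mem_product, Fintype.mem_piFinset] at hzx ⊢
    refine ⟨fun i => ?_, hzx.1 a⟩
    rcases eq_or_ne i a with rfl | h
    · simpa using hzx.2
    · simpa [Function.update_of_ne h] using hzx.1 i
  · rintro ⟨z, x⟩ hzx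
    simp only [Finset.mem_product, Fintype.mem_piFinset] at hzx ⊢
    refine ⟨fun i => ?_, hzx.1 a⟩
    rcases eq_or_ne i a with rfl | h
    · simpa using hzx.2
    · simpa [Function.update_of_ne h] using hzx.1 i
  · rintro ⟨z, x⟩ _
    simp [Function.update_idem, Function.update_eq_self]
  · rintro ⟨z, x⟩ _
    simp [Function.update_idem, Function.update_eq_self]
  · rintro ⟨z, x⟩ _
    simp


lemma sum_update_aux2 (X : Fin m → Finset V) (a b : Fin m) (F : (Fin m → V) → ℝ) :
    ∑ z ∈ Fintype.piFinset X, ∑ x ∈ X a, ∑ y ∈ X b,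
        F (Function.update (Function.update z a x) b y)
      = ((X a).card : ℝ) * (((X b).card : ℝ) * ∑ z ∈ Fintype.piFinset X, F z) := by
  calc ∑ z ∈ Fintype.piFinset X, ∑ x ∈ X a, ∑ y ∈ X b,
        F (Function.update (Function.update z a x) b y)
      = ∑ z ∈ Fintype.piFinset X, ∑ x ∈ X a,
          (fun z' => ∑ y ∈ X b, F (Function.update z' b y)) (Function.update z a x) := rfl
    _ = ((X a).card : ℝ) * ∑ z ∈ Fintype.piFinset X,
          (fun z' => ∑ y ∈ X b, F (Function.update z' b y)) z :=
        sum_update_aux X a (fun z' => ∑ y ∈ X b, F (Function.update z' b y))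
    _ = ((X a).card : ℝ) * (((X b).card : ℝ) * ∑ z ∈ Fintype.piFinset X, F z) := by
        rw [sum_update_aux X b F]

lemma prod01 {Γ : V → V → ℝ} (hΓ01 : ∀ x y, Γ x y = 0 ∨ Γ x y = 1)
    (A : Finset (Fin m × Fin m)) (w : Fin m → V) :
    (∏ f ∈ A, Γ (w f.1) (w f.2)) = 0 ∨ (∏ f ∈ A, Γ (w f.1) (w f.2)) = 1 := by
  induction A using Finset.induction_on with
  | empty => right; simp
  | @insert e s h ih =>
    rw [Finset.prod_insert h]
    rcases hΓ01 (w e.1) (w e.2) with h1 | h1 <;> rcases ih with h2 | h2 <;> simp [h1, h2]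

lemma numeric_aux (p c k : ℝ) (hp : 0 < p) (hp1 : p ≤ 1) (hc : 0 < c)
    (t' nA nB sN : ℕ) (hsum : (nA : ℝ) + nB = 2 * t' - sN) (hsk : (sN : ℝ) ≤ 2 * k - 2) :
    c * p ^ k * Real.sqrt (((1 + c) * p) ^ nA * ((1 + c) * p) ^ nB)
      ≤ c * ((1 + c) ^ t' * p ^ (t' + 1)) := by
  have hq : (0 : ℝ) < (1 + c) * p := by positivity
  have h1c : (0:ℝ) < 1 + c := by linarith
  rw [← pow_add]
  set μ : ℝ := ((nA : ℝ) + nB) / 2 with hμ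
  have h1 : Real.sqrt (((1 + c) * p) ^ (nA + nB)) = ((1 + c) * p) ^ μ := by
    rw [← Real.rpow_natCast ((1 + c) * p) (nA + nB), Real.sqrt_eq_rpow,
      ← Real.rpow_mul hq.le]
    congr 1
    push_cast
    rw [hμ]; ring
  rw [h1, Real.mul_rpow h1c.le hp.le]
  have h2 : (1 + c) ^ μ ≤ (1 + c) ^ (t' : ℝ) := by
    apply Real.rpow_le_rpow_of_exponent_le (by linarith)
    have : (0:ℝ) ≤ (sN : ℝ) := Nat.cast_nonneg _
    rw [hμ]; linarith
  have h3 : p ^ k * p ^ μ ≤ p ^ ((t' : ℝ) + 1) := by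
    rw [← Real.rpow_add hp]
    apply Real.rpow_le_rpow_of_exponent_ge hp hp1
    rw [hμ]; linarith
  have h4 : (1 + c) ^ (t' : ℝ) = (1 + c) ^ t' := Real.rpow_natCast _ _
  have h5 : p ^ ((t' : ℝ) + 1) = p ^ (t' + 1) := by
    rw [show ((t' : ℝ) + 1) = ((t' + 1 : ℕ) : ℝ) by push_cast; ring, Real.rpow_natCast]
  have hμ0 : 0 ≤ (1+c) ^ μ := (Real.rpow_pos_of_pos h1c μ).le
  have hp0 : 0 ≤ p ^ μ := (Real.rpow_pos_of_pos hp μ).le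
  calc c * p ^ k * ((1 + c) ^ μ * p ^ μ) = c * ((1 + c) ^ μ * (p ^ k * p ^ μ)) := by ring
    _ ≤ c * ((1 + c) ^ (t' : ℝ) * p ^ ((t' : ℝ) + 1)) := by
        apply mul_le_mul_of_nonneg_left _ hc.le
        apply mul_le_mul h2 h3 (by positivity) (by positivity)
    _ = c * ((1 + c) ^ t' * p ^ (t' + 1)) := by rw [h4, h5]

lemma key (X : Fin m → Finset V) (Γ : V → V → ℝ)
    (hX : ∀ i, (X i).Nonempty) (hΓ01 : ∀ x y, Γ x y = 0 ∨ Γ x y = 1)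
    (p c k : ℝ) (hp : 0 < p) (hp1 : p ≤ 1) (hc : 0 < c) (hk : 1 ≤ k) :
    ∀ A : Finset (Fin m × Fin m),
      (∀ e ∈ A, e.1 < e.2) →
      (∀ e ∈ A, Jumbled Γ (X e.1) (X e.2) p (c * p ^ k)) →
      (∀ B ⊆ A, B.Nonempty → ∃ e ∈ B,
        ((B.filter fun f => f ≠ e ∧ (f.1 = e.1 ∨ f.1 = e.2 ∨ f.2 = e.1 ∨ f.2 = e.2)).card : ℝ)
          ≤ 2 * k - 2) →
      |NN X Γ A / ∏ i, ((X i).card : ℝ) - p ^ A.card|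
        ≤ ((1 + c) ^ A.card - 1) * p ^ A.card := by
  classical
  have hP : (0:ℝ) < ∏ i, ((X i).card : ℝ) :=
    Finset.prod_pos fun i _ => by exact_mod_cast Finset.card_pos.2 (hX i)
  set P : ℝ := ∏ i, ((X i).card : ℝ) with hPdef
  have hNN0 : ∀ B : Finset (Fin m × Fin m), 0 ≤ NN X Γ B := by
    intro B
    refine Finset.sum_nonneg fun z _ => ?_
    rcases prod01 hΓ01 B z with h | h <;> rw [h] <;> norm_num
  intro A
  induction A using Finset.strongInduction with
  | _ A ih =>
  intro hlt hj hd
  rcases A.eq_empty_or_nonempty with rfl | hA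
  · have : NN X Γ (∅ : Finset (Fin m × Fin m)) = P := by
      simp [NN, hPdef, Fintype.card_piFinset]
    rw [this, div_self (ne_of_gt hP)]
    simp
  obtain ⟨e, he, hs⟩ := hd A Finset.Subset.rfl hA
  obtain ⟨a, b⟩ := e
  have hab : a < b := hlt ⟨a, b⟩ he
  have hne : a ≠ b := ne_of_lt hab
  set A' := A.erase (a, b) with hA'def
  set Sa := A'.filter (fun f => f.1 = a ∨ f.2 = a) with hSadef
  set Sb := A'.filter (fun f => f.1 = b ∨ f.2 = b) with hSbdef
  set T := A'.filter (fun f => (f.1 = a ∨ f.2 = a) ∨ (f.1 = b ∨ f.2 = b)) with hTdef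
  set R := A'.filter (fun f => ¬((f.1 = a ∨ f.2 = a) ∨ (f.1 = b ∨ f.2 = b))) with hRdef
  have hT : T = Sa ∪ Sb := Finset.filter_or _ _ _
  have hTR : T ∪ R = A' := Finset.filter_union_filter_not_eq _ _
  -- structural facts
  have hmemA' : ∀ f ∈ A', f ∈ A ∧ f ≠ (a, b) := by
    intro f hf
    exact ⟨Finset.mem_of_mem_erase hf, Finset.ne_of_mem_erase hf⟩
  have hSa' : ∀ f ∈ Sa, f.1 ≠ b ∧ f.2 ≠ b := by
    intro f hf
    obtain ⟨hf', hpa⟩ := Finset.mem_filter.1 hf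
    obtain ⟨hfA, hfe⟩ := hmemA' f hf'
    have hflt := hlt f hfA
    rcases hpa with h | h
    · refine ⟨by rw [h]; exact hne, fun h2 => hfe ?_⟩
      exact Prod.ext h h2
    · constructor
      · intro h1; rw [h1] at hflt; rw [h] at hflt; exact absurd (hflt.trans hab) (lt_irrefl b)
      · rw [h]; exact hne
  have hSb' : ∀ f ∈ Sb, f.1 ≠ a ∧ f.2 ≠ a := by
    intro f hf
    obtain ⟨hf', hpb⟩ := Finset.mem_filter.1 hf
    obtain ⟨hfA, hfe⟩ := hmemA' f hf'
    have hflt := hlt f hfA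
    rcases hpb with h | h
    · constructor
      · rw [h]; exact hne.symm
      · intro h2; rw [h2, h] at hflt; exact absurd (hab.trans hflt) (lt_irrefl a)
    · refine ⟨fun h1 => hfe (Prod.ext h1 h), by rw [h]; exact hne.symm⟩
  have hR' : ∀ f ∈ R, f.1 ≠ a ∧ f.2 ≠ a ∧ f.1 ≠ b ∧ f.2 ≠ b := by
    intro f hf
    obtain ⟨_, hnp⟩ := Finset.mem_filter.1 hf
    push_neg at hnp
    exact ⟨hnp.1.1, hnp.1.2, hnp.2.1, hnp.2.2⟩
  have hdSaSb : Disjoint Sa Sb := by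
    rw [Finset.disjoint_left]
    intro f hfa hfb
    obtain ⟨h1, h2⟩ := hSa' f hfa
    obtain ⟨_, hpb⟩ := Finset.mem_filter.1 hfb
    rcases hpb with h | h
    · exact h1 h
    · exact h2 h
  have hdTR : Disjoint T R := Finset.disjoint_filter_filter_not _ _ _
  have hdRSa : Disjoint R Sa := by
    rw [Finset.disjoint_left]
    intro f hfr hfa
    obtain ⟨h1, h2, _, _⟩ := hR' f hfr
    obtain ⟨_, hpa⟩ := Finset.mem_filter.1 hfa
    rcases hpa with h | h
    · exact h1 h
    · exact h2 h
  have hdRSb : Disjoint R Sb := by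
    rw [Finset.disjoint_left]
    intro f hfr hfb
    obtain ⟨_, _, h1, h2⟩ := hR' f hfr
    obtain ⟨_, hpb⟩ := Finset.mem_filter.1 hfb
    rcases hpb with h | h
    · exact h1 h
    · exact h2 h
  -- the three weight functions
  set u : (Fin m → V) → V → ℝ :=
    fun z x => ∏ f ∈ Sa, Γ (Function.update z a x f.1) (Function.update z a x f.2) with hudef
  set v : (Fin m → V) → V → ℝ :=
    fun z y => ∏ f ∈ Sb, Γ (Function.update z b y f.1) (Function.update z b y f.2) with hvdef
  set W : (Fin m → V) → ℝ := fun z => ∏ f ∈ R, Γ (z f.1) (z f.2) with hWdef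
  have hu01 : ∀ z x, u z x = 0 ∨ u z x = 1 := fun z x => prod01 hΓ01 _ _
  have hv01 : ∀ z y, v z y = 0 ∨ v z y = 1 := fun z y => prod01 hΓ01 _ _
  have hW01 : ∀ z, W z = 0 ∨ W z = 1 := fun z => prod01 hΓ01 _ _
  have hu01' : ∀ z x, 0 ≤ u z x ∧ u z x ≤ 1 := by
    intro z x; rcases hu01 z x with h | h <;> rw [h] <;> norm_num
  have hv01' : ∀ z y, 0 ≤ v z y ∧ v z y ≤ 1 := by
    intro z y; rcases hv01 z y with h | h <;> rw [h] <;> norm_num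
  have hW0 : ∀ z, 0 ≤ W z := by
    intro z; rcases hW01 z with h | h <;> rw [h] <;> norm_num
  -- split lemma for A'
  have hsplit' : ∀ (z : Fin m → V) (x y : V), (∏ f ∈ A',
      Γ (Function.update (Function.update z a x) b y f.1)
        (Function.update (Function.update z a x) b y f.2)) = u z x * (v z y * W z) := by
    intro z x y
    set w := Function.update (Function.update z a x) b y with hw
    have hwb' : ∀ c : Fin m, c ≠ b → w c = Function.update z a x c := fun c hc =>
      Function.update_of_ne hc _ _
    have hwa' : ∀ c : Fin m, c ≠ a → w c = Function.update z b y c := by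
      intro c hcne
      rcases eq_or_ne c b with rfl | h
      · rw [hw]; simp
      · rw [hwb' c h, Function.update_of_ne hcne, Function.update_of_ne h]
    have hz' : ∀ c : Fin m, c ≠ a → c ≠ b → w c = z c := by
      intro c hca hcb
      rw [hwb' c hcb, Function.update_of_ne hca]
    have e1 : (∏ f ∈ Sa, Γ (w f.1) (w f.2)) = u z x :=
      Finset.prod_congr rfl fun f hf => by
        obtain ⟨h1, h2⟩ := hSa' f hf; rw [hwb' _ h1, hwb' _ h2]
    have e2 : (∏ f ∈ Sb, Γ (w f.1) (w f.2)) = v z y :=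
      Finset.prod_congr rfl fun f hf => by
        obtain ⟨h1, h2⟩ := hSb' f hf; rw [hwa' _ h1, hwa' _ h2]
    have e3 : (∏ f ∈ R, Γ (w f.1) (w f.2)) = W z :=
      Finset.prod_congr rfl fun f hf => by
        obtain ⟨h1, h2, h3, h4⟩ := hR' f hf; rw [hz' _ h1 h3, hz' _ h2 h4]
    calc (∏ f ∈ A', Γ (w f.1) (w f.2))
        = (∏ f ∈ T, Γ (w f.1) (w f.2)) * ∏ f ∈ R, Γ (w f.1) (w f.2) := by
          rw [← Finset.prod_union hdTR, hTR]
      _ = ((∏ f ∈ Sa, Γ (w f.1) (w f.2)) * ∏ f ∈ Sb, Γ (w f.1) (w f.2)) *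
            ∏ f ∈ R, Γ (w f.1) (w f.2) := by rw [hT, Finset.prod_union hdSaSb]
      _ = u z x * (v z y * W z) := by rw [e1, e2, e3]; ring
  have hsplit : ∀ (z : Fin m → V) (x y : V), (∏ f ∈ A,
      Γ (Function.update (Function.update z a x) b y f.1)
        (Function.update (Function.update z a x) b y f.2))
        = Γ x y * (u z x * (v z y * W z)) := by
    intro z x y
    have hins : A = insert (a, b) A' := (Finset.insert_erase he).symm
    rw [hins, Finset.prod_insert (Finset.notMem_erase _ _), hsplit']
    congr 1
    show Γ (Function.update (Function.update z a x) b y a)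
        (Function.update (Function.update z a x) b y b) = Γ x y
    rw [Function.update_of_ne hne, Function.update_self, Function.update_self]
  have hca : (0:ℝ) < ((X a).card : ℝ) := by exact_mod_cast Finset.card_pos.2 (hX a)
  have hcb : (0:ℝ) < ((X b).card : ℝ) := by exact_mod_cast Finset.card_pos.2 (hX b)
  have hNA : ((X a).card : ℝ) * (((X b).card : ℝ) * NN X Γ A)
      = ∑ z ∈ Fintype.piFinset X, ∑ x ∈ X a, ∑ y ∈ X b,
          Γ x y * (u z x * (v z y * W z)) := by
    unfold NN
    rw [← sum_update_aux2 X a b (fun z => ∏ f ∈ A, Γ (z f.1) (z f.2))]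
    exact Finset.sum_congr rfl fun z _ => Finset.sum_congr rfl fun x _ =>
      Finset.sum_congr rfl fun y _ => hsplit z x y
  have hNA' : ((X a).card : ℝ) * (((X b).card : ℝ) * NN X Γ A')
      = ∑ z ∈ Fintype.piFinset X, ∑ x ∈ X a, ∑ y ∈ X b, u z x * (v z y * W z) := by
    unfold NN
    rw [← sum_update_aux2 X a b (fun z => ∏ f ∈ A', Γ (z f.1) (z f.2))]
    exact Finset.sum_congr rfl fun z _ => Finset.sum_congr rfl fun x _ =>
      Finset.sum_congr rfl fun y _ => hsplit' z x y
  set Δ : (Fin m → V) → ℝ :=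
    fun z => ∑ x ∈ X a, ∑ y ∈ X b, (Γ x y - p) * u z x * v z y with hΔdef
  have hdiff : ((X a).card : ℝ) * (((X b).card : ℝ) * (NN X Γ A - p * NN X Γ A'))
      = ∑ z ∈ Fintype.piFinset X, W z * Δ z := by
    have h0 : ((X a).card : ℝ) * (((X b).card : ℝ) * (NN X Γ A - p * NN X Γ A'))
        = ((X a).card : ℝ) * (((X b).card : ℝ) * NN X Γ A)
          - p * (((X a).card : ℝ) * (((X b).card : ℝ) * NN X Γ A')) := by ring
    rw [h0, hNA, hNA', Finset.mul_sum, ← Finset.sum_sub_distrib]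
    refine Finset.sum_congr rfl fun z _ => ?_
    rw [hΔdef]
    simp only [Finset.mul_sum, ← Finset.sum_sub_distrib]
    refine Finset.sum_congr rfl fun x _ => Finset.sum_congr rfl fun y _ => by ring
  -- jumbledness pointwise
  have hΔbound : ∀ z, |Δ z| ≤ (c * p ^ k *
      Real.sqrt ((∑ x ∈ X a, u z x) / ((X a).card : ℝ)) *
      Real.sqrt ((∑ y ∈ X b, v z y) / ((X b).card : ℝ))) *
      (((X a).card : ℝ) * ((X b).card : ℝ)) := by
    intro z
    have hJ : |Δ z / (((X a).card : ℝ) * ((X b).card : ℝ))|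
        ≤ c * p ^ k * Real.sqrt ((∑ x ∈ X a, u z x) / ((X a).card : ℝ)) *
            Real.sqrt ((∑ y ∈ X b, v z y) / ((X b).card : ℝ)) :=
      hj (a, b) he (u z) (v z) (hu01' z) (hv01' z)
    have hcc : (0:ℝ) < ((X a).card : ℝ) * ((X b).card : ℝ) := mul_pos hca hcb
    have h3 : |Δ z| = |Δ z / (((X a).card : ℝ) * ((X b).card : ℝ))|
        * (((X a).card : ℝ) * ((X b).card : ℝ)) := by
      rw [abs_div, abs_of_pos hcc, div_mul_cancel₀ _ (ne_of_gt hcc)]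
    rw [h3]
    exact mul_le_mul_of_nonneg_right hJ hcc.le
  -- summing up
  have hU0 : ∀ z, 0 ≤ (∑ x ∈ X a, u z x) / ((X a).card : ℝ) := fun z =>
    div_nonneg (Finset.sum_nonneg fun x _ => (hu01' z x).1) hca.le
  have hV0 : ∀ z, 0 ≤ (∑ y ∈ X b, v z y) / ((X b).card : ℝ) := fun z =>
    div_nonneg (Finset.sum_nonneg fun y _ => (hv01' z y).1) hcb.le
  have hWsqrt : ∀ z, W z * (Real.sqrt ((∑ x ∈ X a, u z x) / ((X a).card : ℝ)) *
      Real.sqrt ((∑ y ∈ X b, v z y) / ((X b).card : ℝ)))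
      = Real.sqrt (W z * ((∑ x ∈ X a, u z x) / ((X a).card : ℝ))) *
        Real.sqrt (W z * ((∑ y ∈ X b, v z y) / ((X b).card : ℝ))) := by
    intro z
    rcases hW01 z with h | h <;> rw [h] <;> simp
  have hCS : ∑ z ∈ Fintype.piFinset X,
        Real.sqrt (W z * ((∑ x ∈ X a, u z x) / ((X a).card : ℝ))) *
        Real.sqrt (W z * ((∑ y ∈ X b, v z y) / ((X b).card : ℝ)))
      ≤ Real.sqrt (∑ z ∈ Fintype.piFinset X, W z * ((∑ x ∈ X a, u z x) / ((X a).card : ℝ))) *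
        Real.sqrt (∑ z ∈ Fintype.piFinset X, W z * ((∑ y ∈ X b, v z y) / ((X b).card : ℝ))) := by
    have hf : ∀ z ∈ Fintype.piFinset X,
        0 ≤ W z * ((∑ x ∈ X a, u z x) / ((X a).card : ℝ)) := fun z _ =>
      mul_nonneg (hW0 z) (hU0 z)
    have hg : ∀ z ∈ Fintype.piFinset X,
        0 ≤ W z * ((∑ y ∈ X b, v z y) / ((X b).card : ℝ)) := fun z _ =>
      mul_nonneg (hW0 z) (hV0 z)
    have h1 := Finset.sum_sq_le_sum_mul_sum_of_sq_eq_mul (Fintype.piFinset X)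
      (r := fun z => Real.sqrt (W z * ((∑ x ∈ X a, u z x) / ((X a).card : ℝ))) *
        Real.sqrt (W z * ((∑ y ∈ X b, v z y) / ((X b).card : ℝ))))
      hf hg (fun z hz => by
        rw [mul_pow, Real.sq_sqrt (hf z hz), Real.sq_sqrt (hg z hz)])
    have h2 : 0 ≤ ∑ z ∈ Fintype.piFinset X,
        Real.sqrt (W z * ((∑ x ∈ X a, u z x) / ((X a).card : ℝ))) *
        Real.sqrt (W z * ((∑ y ∈ X b, v z y) / ((X b).card : ℝ))) :=
      Finset.sum_nonneg fun z _ => mul_nonneg (Real.sqrt_nonneg _) (Real.sqrt_nonneg _)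
    calc ∑ z ∈ Fintype.piFinset X,
          Real.sqrt (W z * ((∑ x ∈ X a, u z x) / ((X a).card : ℝ))) *
          Real.sqrt (W z * ((∑ y ∈ X b, v z y) / ((X b).card : ℝ)))
        = Real.sqrt ((∑ z ∈ Fintype.piFinset X,
            Real.sqrt (W z * ((∑ x ∈ X a, u z x) / ((X a).card : ℝ))) *
            Real.sqrt (W z * ((∑ y ∈ X b, v z y) / ((X b).card : ℝ)))) ^ 2) :=
          (Real.sqrt_sq h2).symm
      _ ≤ Real.sqrt ((∑ z ∈ Fintype.piFinset X,
            W z * ((∑ x ∈ X a, u z x) / ((X a).card : ℝ))) *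
            ∑ z ∈ Fintype.piFinset X, W z * ((∑ y ∈ X b, v z y) / ((X b).card : ℝ))) :=
          Real.sqrt_le_sqrt h1
      _ = _ := Real.sqrt_mul (Finset.sum_nonneg hf) _
  -- identify marginals
  have hmarg : ∀ (i : Fin m) (S : Finset (Fin m × Fin m)),
      Disjoint R S → (∀ f ∈ S, (∀ g ∈ R, True)) → True := fun _ _ _ _ => trivial
  have hH1 : ∑ z ∈ Fintype.piFinset X, W z * ((∑ x ∈ X a, u z x) / ((X a).card : ℝ))
      = NN X Γ (R ∪ Sa) := by
    have h1 : ∀ (z : Fin m → V) (x : V), W z * u z x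
        = ∏ f ∈ R ∪ Sa, Γ (Function.update z a x f.1) (Function.update z a x f.2) := by
      intro z x
      rw [Finset.prod_union hdRSa]
      congr 1
      exact Finset.prod_congr rfl fun f hf => by
        obtain ⟨h1, h2, _, _⟩ := hR' f hf
        rw [Function.update_of_ne h1, Function.update_of_ne h2]
    have h2 : ∑ z ∈ Fintype.piFinset X, ∑ x ∈ X a, W z * u z x
        = ((X a).card : ℝ) * NN X Γ (R ∪ Sa) := by
      unfold NN
      rw [← sum_update_aux X a (fun z => ∏ f ∈ R ∪ Sa, Γ (z f.1) (z f.2))]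
      exact Finset.sum_congr rfl fun z _ => Finset.sum_congr rfl fun x _ => h1 z x
    calc ∑ z ∈ Fintype.piFinset X, W z * ((∑ x ∈ X a, u z x) / ((X a).card : ℝ))
        = (∑ z ∈ Fintype.piFinset X, ∑ x ∈ X a, W z * u z x) / ((X a).card : ℝ) := by
          rw [Finset.sum_div]
          exact Finset.sum_congr rfl fun z _ => by
            rw [← Finset.mul_sum, mul_div_assoc]
      _ = NN X Γ (R ∪ Sa) := by rw [h2, mul_div_cancel_left₀ _ (ne_of_gt hca)]
  have hH2 : ∑ z ∈ Fintype.piFinset X, W z * ((∑ y ∈ X b, v z y) / ((X b).card : ℝ))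
      = NN X Γ (R ∪ Sb) := by
    have h1 : ∀ (z : Fin m → V) (y : V), W z * v z y
        = ∏ f ∈ R ∪ Sb, Γ (Function.update z b y f.1) (Function.update z b y f.2) := by
      intro z y
      rw [Finset.prod_union hdRSb]
      congr 1
      exact Finset.prod_congr rfl fun f hf => by
        obtain ⟨_, _, h3, h4⟩ := hR' f hf
        rw [Function.update_of_ne h3, Function.update_of_ne h4]
    have h2 : ∑ z ∈ Fintype.piFinset X, ∑ y ∈ X b, W z * v z y
        = ((X b).card : ℝ) * NN X Γ (R ∪ Sb) := by
      unfold NN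
      rw [← sum_update_aux X b (fun z => ∏ f ∈ R ∪ Sb, Γ (z f.1) (z f.2))]
      exact Finset.sum_congr rfl fun z _ => Finset.sum_congr rfl fun y _ => h1 z y
    calc ∑ z ∈ Fintype.piFinset X, W z * ((∑ y ∈ X b, v z y) / ((X b).card : ℝ))
        = (∑ z ∈ Fintype.piFinset X, ∑ y ∈ X b, W z * v z y) / ((X b).card : ℝ) := by
          rw [Finset.sum_div]
          exact Finset.sum_congr rfl fun z _ => by
            rw [← Finset.mul_sum, mul_div_assoc]
      _ = NN X Γ (R ∪ Sb) := by rw [h2, mul_div_cancel_left₀ _ (ne_of_gt hcb)]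
  -- the master inequality
  have hmaster : |NN X Γ A - p * NN X Γ A'|
      ≤ c * p ^ k * (Real.sqrt (NN X Γ (R ∪ Sa)) * Real.sqrt (NN X Γ (R ∪ Sb))) := by
    have hcc : (0:ℝ) < ((X a).card : ℝ) * ((X b).card : ℝ) := mul_pos hca hcb
    have hpk : (0:ℝ) ≤ c * p ^ k := mul_nonneg hc.le (Real.rpow_nonneg hp.le k)
    have step1 : |NN X Γ A - p * NN X Γ A'| * (((X a).card : ℝ) * ((X b).card : ℝ))
        = |∑ z ∈ Fintype.piFinset X, W z * Δ z| := by
      rw [← hdiff, abs_mul, abs_mul, abs_of_pos hca, abs_of_pos hcb]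
      ring
    have step2 : |∑ z ∈ Fintype.piFinset X, W z * Δ z|
        ≤ ∑ z ∈ Fintype.piFinset X, W z * ((c * p ^ k *
            Real.sqrt ((∑ x ∈ X a, u z x) / ((X a).card : ℝ)) *
            Real.sqrt ((∑ y ∈ X b, v z y) / ((X b).card : ℝ))) *
            (((X a).card : ℝ) * ((X b).card : ℝ))) := by
      refine (Finset.abs_sum_le_sum_abs _ _).trans (Finset.sum_le_sum fun z _ => ?_)
      rw [abs_mul, abs_of_nonneg (hW0 z)]
      exact mul_le_mul_of_nonneg_left (hΔbound z) (hW0 z)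
    have step3 : ∑ z ∈ Fintype.piFinset X, W z * ((c * p ^ k *
            Real.sqrt ((∑ x ∈ X a, u z x) / ((X a).card : ℝ)) *
            Real.sqrt ((∑ y ∈ X b, v z y) / ((X b).card : ℝ))) *
            (((X a).card : ℝ) * ((X b).card : ℝ)))
        = (c * p ^ k * (((X a).card : ℝ) * ((X b).card : ℝ))) *
            ∑ z ∈ Fintype.piFinset X,
              Real.sqrt (W z * ((∑ x ∈ X a, u z x) / ((X a).card : ℝ))) *
              Real.sqrt (W z * ((∑ y ∈ X b, v z y) / ((X b).card : ℝ))) := by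
      rw [Finset.mul_sum]
      refine Finset.sum_congr rfl fun z _ => ?_
      rw [← hWsqrt z]
      ring
    have step4 : (c * p ^ k * (((X a).card : ℝ) * ((X b).card : ℝ))) *
            ∑ z ∈ Fintype.piFinset X,
              Real.sqrt (W z * ((∑ x ∈ X a, u z x) / ((X a).card : ℝ))) *
              Real.sqrt (W z * ((∑ y ∈ X b, v z y) / ((X b).card : ℝ)))
        ≤ (c * p ^ k * (((X a).card : ℝ) * ((X b).card : ℝ))) *
            (Real.sqrt (NN X Γ (R ∪ Sa)) * Real.sqrt (NN X Γ (R ∪ Sb))) := by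
      refine mul_le_mul_of_nonneg_left ?_ (mul_nonneg hpk hcc.le)
      refine le_of_le_of_eq hCS ?_
      rw [hH1, hH2]
    have := step2.trans (step3.le.trans step4)
    rw [← step1] at this
    have h6 : |NN X Γ A - p * NN X Γ A'| * (((X a).card : ℝ) * ((X b).card : ℝ))
        ≤ (c * p ^ k * (Real.sqrt (NN X Γ (R ∪ Sa)) * Real.sqrt (NN X Γ (R ∪ Sb)))) *
          (((X a).card : ℝ) * ((X b).card : ℝ)) := by
      calc |NN X Γ A - p * NN X Γ A'| * (((X a).card : ℝ) * ((X b).card : ℝ))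
          ≤ (c * p ^ k * (((X a).card : ℝ) * ((X b).card : ℝ))) *
            (Real.sqrt (NN X Γ (R ∪ Sa)) * Real.sqrt (NN X Γ (R ∪ Sb))) := this
        _ = (c * p ^ k * (Real.sqrt (NN X Γ (R ∪ Sa)) * Real.sqrt (NN X Γ (R ∪ Sb)))) *
            (((X a).card : ℝ) * ((X b).card : ℝ)) := by ring
    exact le_of_mul_le_mul_right h6 hcc
  have hpk2 : (0:ℝ) ≤ c * p ^ k := mul_nonneg hc.le (Real.rpow_nonneg hp.le k)
  -- subset relations and induction applications
  have hA'ss : A' ⊂ A := Finset.erase_ssubset he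
  have hAAsubA' : R ∪ Sa ⊆ A' :=
    Finset.union_subset (Finset.filter_subset _ _) (Finset.filter_subset _ _)
  have hABsubA' : R ∪ Sb ⊆ A' :=
    Finset.union_subset (Finset.filter_subset _ _) (Finset.filter_subset _ _)
  have hAAss : R ∪ Sa ⊂ A := Finset.ssubset_of_subset_of_ssubset hAAsubA' hA'ss
  have hABss : R ∪ Sb ⊂ A := Finset.ssubset_of_subset_of_ssubset hABsubA' hA'ss
  have hsubA' : A' ⊆ A := hA'ss.subset
  have restrict : ∀ B : Finset (Fin m × Fin m), B ⊆ A →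
      (∀ e ∈ B, e.1 < e.2) ∧ (∀ e ∈ B, Jumbled Γ (X e.1) (X e.2) p (c * p ^ k)) ∧
      (∀ C ⊆ B, C.Nonempty → ∃ e ∈ C, ((C.filter fun f => f ≠ e ∧
        (f.1 = e.1 ∨ f.1 = e.2 ∨ f.2 = e.1 ∨ f.2 = e.2)).card : ℝ) ≤ 2 * k - 2) := by
    intro B hB
    exact ⟨fun e heB => hlt e (hB heB), fun e heB => hj e (hB heB),
      fun C hC => hd C (hC.trans hB)⟩
  obtain ⟨l1, l2, l3⟩ := restrict A' hsubA'
  have ihA' := ih A' hA'ss l1 l2 l3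
  obtain ⟨m1, m2, m3⟩ := restrict (R ∪ Sa) (hAAsubA'.trans hsubA')
  have ihAA := ih (R ∪ Sa) hAAss m1 m2 m3
  obtain ⟨n1, n2, n3⟩ := restrict (R ∪ Sb) (hABsubA'.trans hsubA')
  have ihAB := ih (R ∪ Sb) hABss n1 n2 n3
  -- cards
  have hcardA : A.card = A'.card + 1 := by
    rw [hA'def, Finset.card_erase_of_mem he]
    have h0 : 0 < A.card := Finset.card_pos.2 hA
    omega
  have hcardT : T.card = Sa.card + Sb.card := by
    rw [hT, Finset.card_union_of_disjoint hdSaSb]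
  have hcardA' : A'.card = Sa.card + Sb.card + R.card := by
    rw [← hTR, Finset.card_union_of_disjoint hdTR, hcardT]
  have hcardAA : (R ∪ Sa).card = R.card + Sa.card := Finset.card_union_of_disjoint hdRSa
  have hcardAB : (R ∪ Sb).card = R.card + Sb.card := Finset.card_union_of_disjoint hdRSb
  -- degeneracy bound
  have hfilt : (A.filter fun f => f ≠ (a, b) ∧
      (f.1 = (a, b).1 ∨ f.1 = (a, b).2 ∨ f.2 = (a, b).1 ∨ f.2 = (a, b).2)) = T := by
    rw [hTdef, hA'def]
    ext f
    simp only [Finset.mem_filter, Finset.mem_erase]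
    tauto
  rw [hfilt] at hs
  have hsreal : ((Sa.card + Sb.card : ℕ) : ℝ) ≤ 2 * k - 2 := by
    rw [← hcardT]; exact hs
  -- bound the two square roots
  have hDDAA : NN X Γ (R ∪ Sa) / P ≤ ((1 + c) * p) ^ (R ∪ Sa).card := by
    have h1 := (abs_le.1 ihAA).2
    have h2 : ((1 + c) ^ (R ∪ Sa).card - 1) * p ^ (R ∪ Sa).card + p ^ (R ∪ Sa).card
        = ((1 + c) * p) ^ (R ∪ Sa).card := by rw [mul_pow]; ring
    linarith
  have hDDAB : NN X Γ (R ∪ Sb) / P ≤ ((1 + c) * p) ^ (R ∪ Sb).card := by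
    have h1 := (abs_le.1 ihAB).2
    have h2 : ((1 + c) ^ (R ∪ Sb).card - 1) * p ^ (R ∪ Sb).card + p ^ (R ∪ Sb).card
        = ((1 + c) * p) ^ (R ∪ Sb).card := by rw [mul_pow]; ring
    linarith
  -- first term bound in normalized form
  have hfirst : |NN X Γ A / P - p * (NN X Γ A' / P)|
      ≤ c * p ^ k *
        Real.sqrt (((1 + c) * p) ^ (R ∪ Sa).card * ((1 + c) * p) ^ (R ∪ Sb).card) := by
    have h0 : NN X Γ A / P - p * (NN X Γ A' / P) = (NN X Γ A - p * NN X Γ A') / P := by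
      ring
    rw [h0, abs_div, abs_of_pos hP]
    have h1 : |NN X Γ A - p * NN X Γ A'| / P
        ≤ (c * p ^ k * (Real.sqrt (NN X Γ (R ∪ Sa)) * Real.sqrt (NN X Γ (R ∪ Sb)))) / P :=
      (div_le_div_iff_of_pos_right hP).2 hmaster
    refine h1.trans ?_
    have h2 : (c * p ^ k * (Real.sqrt (NN X Γ (R ∪ Sa)) * Real.sqrt (NN X Γ (R ∪ Sb)))) / P
        = c * p ^ k *
          (Real.sqrt (NN X Γ (R ∪ Sa) / P) * Real.sqrt (NN X Γ (R ∪ Sb) / P)) := by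
      rw [Real.sqrt_div (hNN0 _) P, Real.sqrt_div (hNN0 _) P, mul_div_assoc]
      congr 1
      rw [div_mul_div_comm, Real.mul_self_sqrt hP.le]
    rw [h2]
    refine mul_le_mul_of_nonneg_left ?_ hpk2
    rw [Real.sqrt_mul (by positivity : (0:ℝ) ≤ ((1 + c) * p) ^ (R ∪ Sa).card)]
    exact mul_le_mul (Real.sqrt_le_sqrt hDDAA) (Real.sqrt_le_sqrt hDDAB)
      (Real.sqrt_nonneg _) (Real.sqrt_nonneg _)
  have hnum : c * p ^ k *
      Real.sqrt (((1 + c) * p) ^ (R ∪ Sa).card * ((1 + c) * p) ^ (R ∪ Sb).card)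
      ≤ c * ((1 + c) ^ A'.card * p ^ (A'.card + 1)) := by
    apply numeric_aux p c k hp hp1 hc A'.card (R ∪ Sa).card (R ∪ Sb).card
      (Sa.card + Sb.card) ?_ hsreal
    rw [hcardAA, hcardAB, hcardA']; push_cast; ring
  -- final triangle inequality
  rw [hcardA]
  have htri : |NN X Γ A / P - p ^ (A'.card + 1)|
      ≤ |NN X Γ A / P - p * (NN X Γ A' / P)| + p * |NN X Γ A' / P - p ^ A'.card| := by
    have h1 : |p * (NN X Γ A' / P) - p ^ (A'.card + 1)|
        = p * |NN X Γ A' / P - p ^ A'.card| := by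
      rw [show p ^ (A'.card + 1) = p * p ^ A'.card from by ring, ← mul_sub, abs_mul,
        abs_of_pos hp]
    calc |NN X Γ A / P - p ^ (A'.card + 1)|
        ≤ |NN X Γ A / P - p * (NN X Γ A' / P)| + |p * (NN X Γ A' / P) - p ^ (A'.card + 1)| :=
          abs_sub_le _ _ _
      _ = _ := by rw [h1]
  refine htri.trans ?_
  have hsecond : p * |NN X Γ A' / P - p ^ A'.card|
      ≤ p * (((1 + c) ^ A'.card - 1) * p ^ A'.card) :=
    mul_le_mul_of_nonneg_left ihA' hp.le
  calc |NN X Γ A / P - p * (NN X Γ A' / P)| + p * |NN X Γ A' / P - p ^ A'.card|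
      ≤ c * ((1 + c) ^ A'.card * p ^ (A'.card + 1)) +
        p * (((1 + c) ^ A'.card - 1) * p ^ A'.card) :=
        add_le_add (hfirst.trans hnum) hsecond
    _ = ((1 + c) ^ (A'.card + 1) - 1) * p ^ (A'.card + 1) := by ring


variable (H : SimpleGraph (Fin m)) [DecidableRel H.Adj]


noncomputable def EE (H : SimpleGraph (Fin m)) [DecidableRel H.Adj] :
    Finset (Fin m × Fin m) :=
  (Finset.univ ×ˢ Finset.univ).filter fun ij : Fin m × Fin m => ij.1 < ij.2 ∧ H.Adj ij.1 ij.2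

lemma mem_EE {f : Fin m × Fin m} : f ∈ EE H ↔ f.1 < f.2 ∧ H.Adj f.1 f.2 := by
  simp [EE]

lemma EE_inj : ∀ f ∈ EE H, ∀ g ∈ EE H, s(f.1, f.2) = s(g.1, g.2) → f = g := by
  intro f hf g hg hfg
  rw [mem_EE] at hf hg
  rw [Sym2.eq_iff] at hfg
  rcases hfg with ⟨h1, h2⟩ | ⟨h1, h2⟩
  · exact Prod.ext h1 h2
  · exfalso
    rw [← h1, ← h2] at hg
    exact absurd (hf.1.trans hg.1) (lt_irrefl _)

lemma card_EE : H.edgeFinset.card = (EE H).card := by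
  symm
  refine Finset.card_bij (fun f _ => s(f.1, f.2)) ?_ ?_ ?_
  · intro f hf
    rw [mem_EE] at hf
    rw [SimpleGraph.mem_edgeFinset, SimpleGraph.mem_edgeSet]
    exact hf.2
  · intro f hf g hg h
    exact EE_inj H f hf g hg h
  · intro e he
    induction e with
    | _ x y =>
      rw [SimpleGraph.mem_edgeFinset, SimpleGraph.mem_edgeSet] at he
      rcases lt_trichotomy x y with h | h | h
      · exact ⟨(x, y), (mem_EE H).2 ⟨h, he⟩, rfl⟩
      · exact absurd h he.ne
      · exact ⟨(y, x), (mem_EE H).2 ⟨h, he.symm⟩, Sym2.eq_swap⟩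

lemma deg_EE (k : ℝ) (hdeg : (lineGraphDegeneracy H : ℝ) + 2 ≤ 2 * k) :
    ∀ B ⊆ EE H, B.Nonempty → ∃ e ∈ B, ((B.filter fun f => f ≠ e ∧
      (f.1 = e.1 ∨ f.1 = e.2 ∨ f.2 = e.1 ∨ f.2 = e.2)).card : ℝ) ≤ 2 * k - 2 := by
  classical
  intro B hB hBne
  set S := B.image (fun f => s(f.1, f.2)) with hSdef
  have hSsub : S ⊆ H.edgeFinset := by
    intro e he
    rw [hSdef, Finset.mem_image] at he
    obtain ⟨f, hf, rfl⟩ := he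
    have := (mem_EE H).1 (hB hf)
    rw [SimpleGraph.mem_edgeFinset, SimpleGraph.mem_edgeSet]
    exact this.2
  have hSne : S.Nonempty := hBne.image _
  have hsup : (if h : S.Nonempty then
      S.inf' h (fun e => (S.filter fun f => f ≠ e ∧ ∃ v, v ∈ e ∧ v ∈ f).card)
      else 0) ≤ lineGraphDegeneracy H := by
    unfold lineGraphDegeneracy
    exact Finset.le_sup (f := fun S => if h : S.Nonempty then
        S.inf' h fun e => (S.filter fun f => f ≠ e ∧ ∃ v, v ∈ e ∧ v ∈ f).card else 0)
      (Finset.mem_powerset.2 hSsub)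
  rw [dif_pos hSne] at hsup
  obtain ⟨e₀, he₀S, he₀⟩ := Finset.exists_mem_eq_inf' hSne
    (fun e => (S.filter fun f => f ≠ e ∧ ∃ v, v ∈ e ∧ v ∈ f).card)
  rw [he₀] at hsup
  obtain ⟨ab, hab, habe⟩ := Finset.mem_image.1 he₀S
  refine ⟨ab, hab, ?_⟩
  have hcard : (B.filter fun f => f ≠ ab ∧
      (f.1 = ab.1 ∨ f.1 = ab.2 ∨ f.2 = ab.1 ∨ f.2 = ab.2)).card
      ≤ (S.filter fun f => f ≠ e₀ ∧ ∃ v, v ∈ e₀ ∧ v ∈ f).card := by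
    refine Finset.card_le_card_of_injOn (fun f => s(f.1, f.2)) ?_ ?_
    · intro f hf
      rw [Finset.mem_coe, Finset.mem_filter] at hf; rw [Finset.mem_coe, Finset.mem_filter]
      obtain ⟨hfB, hfne, hshare⟩ := hf
      refine ⟨Finset.mem_image_of_mem _ hfB, ?_, ?_⟩
      · intro hcon
        rw [← habe] at hcon
        exact hfne (EE_inj H f (hB hfB) ab (hB hab) hcon)
      · rw [← habe]
        rcases hshare with h | h | h | h
        · exact ⟨f.1, by rw [h]; exact Sym2.mem_mk_left _ _, Sym2.mem_mk_left _ _⟩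
        · exact ⟨f.1, by rw [h]; exact Sym2.mem_mk_right _ _, Sym2.mem_mk_left _ _⟩
        · exact ⟨f.2, by rw [h]; exact Sym2.mem_mk_left _ _, Sym2.mem_mk_right _ _⟩
        · exact ⟨f.2, by rw [h]; exact Sym2.mem_mk_right _ _, Sym2.mem_mk_right _ _⟩
    · intro f hf g hg hfg
      rw [Finset.coe_filter] at hf hg
      exact EE_inj H f (hB hf.1) g (hB hg.1) hfg
  have h2 : ((S.filter fun f => f ≠ e₀ ∧ ∃ v, v ∈ e₀ ∧ v ∈ f).card : ℝ)
      ≤ (lineGraphDegeneracy H : ℝ) := Nat.cast_le.2 hsup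
  have h3 : ((B.filter fun f => f ≠ ab ∧
      (f.1 = ab.1 ∨ f.1 = ab.2 ∨ f.2 = ab.1 ∨ f.2 = ab.2)).card : ℝ)
      ≤ ((S.filter fun f => f ≠ e₀ ∧ ∃ v, v ∈ e₀ ∧ v ∈ f).card : ℝ) := Nat.cast_le.2 hcard
  linarith

lemma den_eq (X : Fin m → Finset V) (Γ : V → V → ℝ) :
    den (fun _ _ u v => Γ u v) H X
      = (∑ z ∈ Fintype.piFinset X, ∏ f ∈ EE H, Γ (z f.1) (z f.2)) /
          ∏ i, ((X i).card : ℝ) := by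
  unfold den
  congr 1
  refine Finset.sum_congr (by congr) fun z _ => ?_
  rw [EE, Finset.prod_filter, Finset.prod_product]
  refine Finset.prod_congr rfl fun i _ => Finset.prod_congr rfl fun j _ => ?_
  rcases Classical.em (i < j ∧ H.Adj i j) with h | h
  · rw [if_pos h, if_pos h]
  · rw [if_neg h, if_neg h]



end CountingProof

theorem stmt_5 {V : Type*} [Fintype V] {m : ℕ} (H : SimpleGraph (Fin m))
    [DecidableRel H.Adj]
    (X : Fin m → Finset V) (hX : ∀ i, (X i).Nonempty)
    (Γ : V → V → ℝ) (hΓsymm : ∀ x y, Γ x y = Γ y x)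
    (hΓ01 : ∀ x y, Γ x y = 0 ∨ Γ x y = 1)
    (p c k : ℝ) (hp : 0 < p) (hp1 : p ≤ 1) (hc : 0 < c) (hc1 : c ≤ 1) (hk : 1 ≤ k)
    (hdeg : (lineGraphDegeneracy H : ℝ) + 2 ≤ 2 * k)
    (hjumb : ∀ i j, H.Adj i j → Jumbled Γ (X i) (X j) p (c * p ^ k)) :
    |den (fun _ _ u v => Γ u v) H X - p ^ H.edgeFinset.card|
      ≤ ((1 + c) ^ H.edgeFinset.card - 1) * p ^ H.edgeFinset.card := by
  have hden := den_eq H X Γ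
  rw [hden, card_EE H]
  exact key X Γ hX hΓ01 p c k hp hp1 hc hk (EE H)
    (fun e he => ((mem_EE H).1 he).1)
    (fun e he => hjumb e.1 e.2 ((mem_EE H).1 he).2)
    (deg_EE H k hdeg)
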